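/- Let f : 𝔻 → ℂ be holomorphic and injective. Then for every r with 0 < r < 1, the area of f(𝔻_r) satisfies |f(𝔻_r)| ≤ r² |f(𝔻)|. -/

import Mathlib

open MeasureTheory Metric Set Complex Real Filter
open scoped ENNReal NNReal Topology

lemma det_aux (d : ℂ) :
    (((1 : ℂ →L[ℂ] ℂ).smulRight d).restrictScalars ℝ).det = Complex.normSq d := by
  have h : (((1 : ℂ →L[ℂ] ℂ).smulRight d).restrictScalars ℝ : ℂ →ₗ[ℝ] ℂ)
      = Algebra.lmul ℝ ℂ d := by
    ext z
    simp [mul_comm]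
  rw [ContinuousLinearMap.det, h, ← Algebra.norm_apply, Algebra.norm_complex_apply]

lemma theta_int (k : ℕ) (l : ℕ) :
    (∫ θ in Ioo (-Real.pi) Real.pi, Complex.exp (((k : ℂ) - l) * θ * Complex.I))
      = if k = l then ((2 * Real.pi : ℝ) : ℂ) else 0 := by
  rcases eq_or_ne k l with h | h
  · subst h
    simp only [sub_self, zero_mul, Complex.exp_zero, if_pos rfl]
    rw [setIntegral_const, Real.volume_real_Ioo_of_le (by linarith [Real.pi_pos]),
      show Real.pi - -Real.pi = 2 * Real.pi by ring]
    simp [Complex.real_smul]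
  · rw [if_neg h]
    have hk : ((k : ℂ) - l) * Complex.I ≠ 0 := by
      simp only [ne_eq, mul_eq_zero, Complex.I_ne_zero, or_false, sub_eq_zero]
      exact_mod_cast fun hh => h (by exact_mod_cast hh)
    have hrw : ∀ θ : ℝ, Complex.exp (((k : ℂ) - l) * θ * Complex.I)
        = Complex.exp ((((k : ℂ) - l) * Complex.I) * θ) := by
      intro θ; ring_nf
    simp only [hrw]
    rw [← MeasureTheory.integral_Ioc_eq_integral_Ioo,
      ← intervalIntegral.integral_of_le (by linarith [Real.pi_pos] : -Real.pi ≤ Real.pi),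
      integral_exp_mul_complex hk]
    have : Complex.exp (((k : ℂ) - l) * Complex.I * Real.pi)
        = Complex.exp (((k : ℂ) - l) * Complex.I * (-Real.pi : ℝ)) := by
      rw [Complex.exp_eq_exp_iff_exists_int]
      exact ⟨(k : ℤ) - l, by push_cast; ring⟩
    rw [this, sub_self, zero_div]

lemma key_int (t : ℝ) (ht : 0 < t) (n m : ℕ) :
    (∫ z in ball (0:ℂ) t, z ^ n * (starRingEnd ℂ z) ^ m)
      = if n = m then ((Real.pi * t ^ (2 * n + 2) / (n + 1) : ℝ) : ℂ) else 0 := by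
  have hπ := Real.pi_pos
  set F : ℂ → ℂ := fun z => z ^ n * (starRingEnd ℂ z) ^ m with hF
  set G : ℝ × ℝ → ℂ := fun q =>
    ((q.1 : ℂ)) ^ (n + m + 1) * Complex.exp (((n : ℂ) - m) * q.2 * Complex.I) with hG
  set S : Set (ℝ × ℝ) := Ioo (0:ℝ) t ×ˢ Ioo (-Real.pi) Real.pi with hS
  have hsub : S ⊆ polarCoord.target := by
    rw [show polarCoord.target = Ioi (0:ℝ) ×ˢ Ioo (-Real.pi) Real.pi from rfl]
    exact Set.prod_mono Ioo_subset_Ioi_self subset_rfl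
  have step1 : (∫ z in ball (0:ℂ) t, F z) = ∫ p in S, G p := by
    rw [← integral_indicator measurableSet_ball, ← Complex.integral_comp_polarCoord_symm]
    have e1 : (∫ p in polarCoord.target,
          p.1 • (ball (0:ℂ) t).indicator F (Complex.polarCoord.symm p))
        = ∫ p in S, p.1 • (ball (0:ℂ) t).indicator F (Complex.polarCoord.symm p) := by
      apply setIntegral_eq_of_subset_of_forall_diff_eq_zero
        polarCoord.open_target.measurableSet hsub
      intro p hp
      rcases hp with ⟨hpt, hpS⟩
      have hp1 : 0 < p.1 := hpt.1
      have hge : t ≤ p.1 := by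
        by_contra hlt
        push_neg at hlt
        exact hpS ⟨⟨hp1, hlt⟩, hpt.2⟩
      have hnot : Complex.polarCoord.symm p ∉ ball (0:ℂ) t := by
        rw [mem_ball_zero_iff, Complex.norm_polarCoord_symm,
          abs_of_pos hp1, not_lt]
        exact hge
      rw [indicator_of_notMem hnot, smul_zero]
    rw [e1]
    apply setIntegral_congr_fun (by measurability)
    intro p hp
    obtain ⟨hq1, hq2⟩ := hp
    have hp1 : (0:ℝ) < p.1 := hq1.1
    have hmem : Complex.polarCoord.symm p ∈ ball (0:ℂ) t := by
      rw [mem_ball_zero_iff, Complex.norm_polarCoord_symm,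
        abs_of_pos hp1]
      exact hq1.2
    simp only [indicator_of_mem hmem]
    have hsymm : (Complex.polarCoord.symm p : ℂ)
        = (p.1 : ℂ) * Complex.exp (p.2 * Complex.I) := by
      rw [Complex.polarCoord_symm_apply, Complex.exp_mul_I]
      push_cast
      ring
    rw [hF, hsymm]
    simp only [map_mul, map_pow, Complex.conj_ofReal, ← Complex.exp_conj, Complex.conj_I]
    have key : ((p.1 : ℂ) * Complex.exp (p.2 * Complex.I)) ^ n
        * ((p.1 : ℂ) * Complex.exp (p.2 * -Complex.I)) ^ m
        = (p.1 : ℂ) ^ (n + m) * Complex.exp (((n : ℂ) - m) * p.2 * Complex.I) := by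
      rw [mul_pow, mul_pow, ← Complex.exp_nat_mul, ← Complex.exp_nat_mul,
        mul_mul_mul_comm, ← pow_add, ← Complex.exp_add]
      congr 1
      push_cast
      ring
    rw [key, hG]
    simp only [Complex.real_smul]
    ring
  have hGint : IntegrableOn G S := by
    have hGcont : Continuous G := by
      apply Continuous.mul
      · exact (Complex.continuous_ofReal.comp continuous_fst).pow _
      · exact Complex.continuous_exp.comp (by continuity)
    exact ((hGcont.continuousOn).integrableOn_compact
      (isCompact_Icc.prod isCompact_Icc)).mono_set
      (Set.prod_mono Ioo_subset_Icc_self Ioo_subset_Icc_self)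
  have step2 : (∫ p in S, G p)
      = ∫ ρ in Ioo (0:ℝ) t, ∫ θ in Ioo (-Real.pi) Real.pi, G (ρ, θ) := by
    rw [hS]
    exact setIntegral_prod G hGint
  have step3 : ∀ ρ : ℝ, (∫ θ in Ioo (-Real.pi) Real.pi, G (ρ, θ))
      = ((ρ : ℂ)) ^ (n + m + 1) * (if n = m then ((2 * Real.pi : ℝ) : ℂ) else 0) := by
    intro ρ
    rw [hG]
    simp only
    rw [MeasureTheory.integral_const_mul, theta_int]
  rw [step1, step2]
  rcases eq_or_ne n m with h | h
  · subst h
    simp only [step3, eq_self_iff_true, if_true]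
    have hcast : (fun ρ : ℝ => ((ρ:ℂ)) ^ (n + n + 1) * ((2 * Real.pi : ℝ) : ℂ))
        = fun ρ : ℝ => (((ρ ^ (n + n + 1) * (2 * Real.pi) : ℝ)) : ℂ) := by
      funext ρ
      push_cast
      ring
    rw [hcast]
    rw [show (fun ρ : ℝ => (((ρ ^ (n + n + 1) * (2 * Real.pi) : ℝ)) : ℂ))
          = fun ρ : ℝ => (RCLike.ofReal (K := ℂ) (ρ ^ (n + n + 1) * (2 * Real.pi))) from rfl,
      _root_.integral_ofReal, show (RCLike.ofReal (K := ℂ)) = Complex.ofReal from rfl,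
      MeasureTheory.integral_mul_const]
    have hρ : (∫ ρ in Ioo (0:ℝ) t, ρ ^ (n + n + 1)) = t ^ (2 * n + 2) / (2 * n + 2) := by
      rw [← MeasureTheory.integral_Ioc_eq_integral_Ioo,
        ← intervalIntegral.integral_of_le ht.le, integral_pow, zero_pow (by omega),
        show n + n + 1 + 1 = 2 * n + 2 by ring]
      push_cast
      ring
    rw [hρ]
    have h1 : ((n:ℝ) + 1) ≠ 0 := by positivity
    have h2 : (2 * (n:ℝ) + 2) ≠ 0 := by positivity
    congr 1
    field_simp
  · simp only [step3, if_neg h, mul_zero, integral_zero]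

lemma mono_int (t : ℝ) (n m : ℕ) :
    IntegrableOn (fun z : ℂ => z ^ n * (starRingEnd ℂ z) ^ m) (ball (0:ℂ) t) := by
  have hc : Continuous fun z : ℂ => z ^ n * (starRingEnd ℂ z) ^ m := by
    exact (continuous_pow n).mul ((Complex.continuous_conj).pow m)
  exact ((hc.continuousOn).integrableOn_compact (isCompact_closedBall _ _)).mono_set
    ball_subset_closedBall

lemma finite_parseval (c : ℕ → ℂ) (N : ℕ) (t : ℝ) (ht : 0 < t) :
    (∫ z in ball (0:ℂ) t, ‖∑ k ∈ Finset.range N, c k * z ^ k‖ ^ 2)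
      = ∑ k ∈ Finset.range N, ‖c k‖ ^ 2 * (Real.pi * t ^ (2 * k + 2) / (k + 1)) := by
  set P : ℂ → ℂ := fun z => ∑ k ∈ Finset.range N, c k * z ^ k with hP
  have hC : (∫ z in ball (0:ℂ) t, P z * (starRingEnd ℂ) (P z))
      = (((∑ k ∈ Finset.range N, ‖c k‖ ^ 2 * (Real.pi * t ^ (2 * k + 2) / (k + 1)) : ℝ)) : ℂ) := by
    have e1 : ∀ z : ℂ, P z * (starRingEnd ℂ) (P z)
        = ∑ n ∈ Finset.range N, ∑ m ∈ Finset.range N,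
            (c n * (starRingEnd ℂ) (c m)) * (z ^ n * (starRingEnd ℂ z) ^ m) := by
      intro z
      rw [hP]
      simp only [map_sum, map_mul, map_pow, Finset.sum_mul_sum]
      apply Finset.sum_congr rfl
      intro n _
      apply Finset.sum_congr rfl
      intro m _
      ring
    rw [setIntegral_congr_fun measurableSet_ball (fun z _ => e1 z)]
    rw [integral_finset_sum]
    · have e2 : ∀ n ∈ Finset.range N,
          (∫ z in ball (0:ℂ) t, ∑ m ∈ Finset.range N,
            (c n * (starRingEnd ℂ) (c m)) * (z ^ n * (starRingEnd ℂ z) ^ m))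
          = ((‖c n‖ ^ 2 * (Real.pi * t ^ (2 * n + 2) / (n + 1)) : ℝ) : ℂ) := by
        intro n hn
        rw [integral_finset_sum]
        · have e3 : ∀ m ∈ Finset.range N,
              (∫ z in ball (0:ℂ) t, (c n * (starRingEnd ℂ) (c m)) * (z ^ n * (starRingEnd ℂ z) ^ m))
              = if n = m then (c n * (starRingEnd ℂ) (c n)) *
                  ((Real.pi * t ^ (2 * n + 2) / (n + 1) : ℝ) : ℂ) else 0 := by
            intro m _
            rw [MeasureTheory.integral_const_mul, key_int t ht n m]
            rcases eq_or_ne n m with h | h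
            · subst h; simp
            · simp [h]
          rw [Finset.sum_congr rfl e3, Finset.sum_ite_eq (Finset.range N) n
            (fun _ => (c n * (starRingEnd ℂ) (c n)) * ((Real.pi * t ^ (2 * n + 2) / (n + 1) : ℝ) : ℂ)),
            if_pos hn, Complex.mul_conj]
          push_cast
          rw [Complex.normSq_eq_norm_sq]
          norm_cast
        · intro m _
          exact (mono_int t n m).const_mul _
      rw [Finset.sum_congr rfl e2]
      push_cast
      rfl
    · intro n _
      apply integrable_finset_sum
      intro m _
      exact (mono_int t n m).const_mul _
  have hco : (∫ z in ball (0:ℂ) t, ((‖P z‖ ^ 2 : ℝ) : ℂ))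
      = ((∫ z in ball (0:ℂ) t, ‖P z‖ ^ 2 : ℝ) : ℂ) := _root_.integral_ofReal (𝕜 := ℂ)
  have hre : ∀ z : ℂ, ((‖P z‖ ^ 2 : ℝ) : ℂ) = P z * (starRingEnd ℂ) (P z) := by
    intro z
    rw [Complex.sq_norm, Complex.mul_conj]
  apply Complex.ofReal_injective
  rw [← hco, setIntegral_congr_fun measurableSet_ball (fun z _ => hre z), hC]

lemma parseval_hasSum (g : ℂ → ℂ) (p : FormalMultilinearSeries ℂ ℂ ℂ) (R : ℝ≥0∞)
    (hg : HasFPowerSeriesOnBall g p 0 R) (s : ℝ) (hs : 0 < s) (hsR : ENNReal.ofReal s < R) :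
    HasSum (fun n : ℕ => ‖p.coeff n‖ ^ 2 * (Real.pi * s ^ (2 * n + 2) / (n + 1)))
      (∫ z in ball (0:ℂ) s, ‖g z‖ ^ 2) := by
  have hps : ∀ (N : ℕ) (z : ℂ), p.partialSum N z = ∑ k ∈ Finset.range N, p.coeff k * z ^ k := by
    intro N z
    unfold FormalMultilinearSeries.partialSum
    apply Finset.sum_congr rfl
    intro k _
    rw [p.apply_eq_pow_smul_coeff, smul_eq_mul, mul_comm]
  have h' : ((s.toNNReal : ℝ≥0) : ℝ≥0∞) < R := by
    exact hsR
  have hU := hg.tendstoUniformlyOn h'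
  rw [Real.coe_toNNReal s hs.le] at hU
  simp only [zero_add] at hU
  -- continuity of g on the closed ball
  have hsub : closedBall (0:ℂ) s ⊆ Metric.eball (0:ℂ) R := by
    intro z hz
    rw [Metric.mem_eball, edist_dist]
    exact lt_of_le_of_lt (ENNReal.ofReal_le_ofReal (by simpa [dist_eq_norm] using mem_closedBall_zero_iff.1 hz)) hsR
  have hgc : ContinuousOn g (closedBall (0:ℂ) s) := hg.continuousOn.mono hsub
  obtain ⟨C, hC⟩ := (isCompact_closedBall (0:ℂ) s).exists_bound_of_continuousOn hgc
  have hC0 : 0 ≤ C := le_trans (norm_nonneg _) (hC 0 (mem_closedBall_self hs.le))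
  -- the sequence of integrals converges to the integral of ‖g‖²
  have key : Tendsto (fun N => ∫ z in ball (0:ℂ) s, ‖p.partialSum N z‖ ^ 2) atTop
      (𝓝 (∫ z in ball (0:ℂ) s, ‖g z‖ ^ 2)) := by
    apply MeasureTheory.tendsto_integral_filter_of_dominated_convergence
      (fun _ => (C + 1) ^ 2)
    · apply Filter.Eventually.of_forall
      intro N
      exact ((p.partialSum_continuous N).norm.pow 2).aestronglyMeasurable
    · have hev := Metric.tendstoUniformlyOn_iff.1 hU 1 one_pos
      filter_upwards [hev] with N hN
      rw [MeasureTheory.ae_restrict_iff' measurableSet_ball]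
      apply Filter.Eventually.of_forall
      intro z hz
      have h1 : ‖p.partialSum N z‖ ≤ ‖g z‖ + 1 := by
        have := hN z hz
        rw [dist_comm, dist_eq_norm] at this
        calc ‖p.partialSum N z‖ = ‖g z + (p.partialSum N z - g z)‖ := by ring_nf
          _ ≤ ‖g z‖ + ‖p.partialSum N z - g z‖ := norm_add_le _ _
          _ ≤ ‖g z‖ + 1 := by linarith
      have h2 : ‖g z‖ + 1 ≤ C + 1 := by
        have := hC z (ball_subset_closedBall hz)
        linarith
      have h3 : (0:ℝ) ≤ ‖p.partialSum N z‖ := norm_nonneg _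
      have : ‖p.partialSum N z‖ ^ 2 ≤ (C + 1) ^ 2 := by
        apply pow_le_pow_left₀ h3 (le_trans h1 h2)
      calc ‖‖p.partialSum N z‖ ^ 2‖ = ‖p.partialSum N z‖ ^ 2 := by
            rw [Real.norm_of_nonneg (by positivity)]
        _ ≤ (C + 1) ^ 2 := this
    · exact integrableOn_const measure_ball_lt_top.ne (by simp)
    · rw [MeasureTheory.ae_restrict_iff' measurableSet_ball]
      apply Filter.Eventually.of_forall
      intro z hz
      exact ((hU.tendsto_at hz).norm.pow 2)
  have hseq : ∀ N : ℕ, (∫ z in ball (0:ℂ) s, ‖p.partialSum N z‖ ^ 2)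
      = ∑ k ∈ Finset.range N, ‖p.coeff k‖ ^ 2 * (Real.pi * s ^ (2 * k + 2) / (k + 1)) := by
    intro N
    rw [← finite_parseval p.coeff N s hs]
    apply setIntegral_congr_fun measurableSet_ball
    intro z _
    simp only [hps]
  rw [hasSum_iff_tendsto_nat_of_nonneg (fun n => by positivity)]
  simp only [← hseq]
  exact key

lemma vol_image (f : ℂ → ℂ) (hf : DifferentiableOn ℂ f (ball (0:ℂ) 1))
    (hinj : Set.InjOn f (ball (0:ℂ) 1)) (t : ℝ) (ht1 : t ≤ 1) :
    volume (f '' ball (0:ℂ) t)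
      = ∫⁻ z in ball (0:ℂ) t, ENNReal.ofReal (‖deriv f z‖ ^ 2) := by
  have hsub : ball (0:ℂ) t ⊆ ball (0:ℂ) 1 := ball_subset_ball ht1
  set f' : ℂ → ℂ →L[ℝ] ℂ :=
    fun z => ((1 : ℂ →L[ℂ] ℂ).smulRight (deriv f z)).restrictScalars ℝ with hf'
  have hder : ∀ z ∈ ball (0:ℂ) t, HasFDerivWithinAt f (f' z) (ball (0:ℂ) t) z := by
    intro z hz
    have h1 : DifferentiableAt ℂ f z := hf.differentiableAt (isOpen_ball.mem_nhds (hsub hz))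
    have h3 : HasFDerivAt f ((1 : ℂ →L[ℂ] ℂ).smulRight (deriv f z)) z :=
      h1.hasDerivAt.hasFDerivAt
    exact (h3.restrictScalars ℝ).hasFDerivWithinAt
  rw [← MeasureTheory.lintegral_abs_det_fderiv_eq_addHaar_image volume
    measurableSet_ball hder (hinj.mono hsub)]
  apply lintegral_congr
  intro z
  rw [hf']
  rw [det_aux, _root_.abs_of_nonneg (Complex.normSq_nonneg _), Complex.normSq_eq_norm_sq]

theorem area_convexity_holomorphic_injective
    (f : ℂ → ℂ)
    (hf : DifferentiableOn ℂ f (ball (0 : ℂ) 1))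
    (hinj : Set.InjOn f (ball (0 : ℂ) 1)) :
    ∀ r : ℝ, 0 < r → r < 1 →
      volume (f '' ball (0 : ℂ) r)
        ≤ ENNReal.ofReal (r ^ 2) * volume (f '' ball (0 : ℂ) 1) := by
  intro r hr0 hr1
  have hg : DifferentiableOn ℂ (deriv f) (ball (0:ℂ) 1) :=
    ((hf.analyticOnNhd isOpen_ball).deriv).differentiableOn
  have hgc : ContinuousOn (deriv f) (ball (0:ℂ) 1) := hg.continuousOn
  -- integrability of ‖deriv f‖² on balls of radius < 1
  have hint : ∀ u : ℝ, u < 1 → IntegrableOn (fun z : ℂ => ‖deriv f z‖ ^ 2) (ball (0:ℂ) u) := by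
    intro u hu
    have hsub : closedBall (0:ℂ) u ⊆ ball (0:ℂ) 1 := closedBall_subset_ball hu
    exact (((hgc.mono hsub).norm.pow 2).integrableOn_compact
      (isCompact_closedBall _ _)).mono_set ball_subset_closedBall
  have hnn : ∀ u : ℝ, (fun _ : ℂ => (0:ℝ)) ≤ᵐ[volume.restrict (ball (0:ℂ) u)]
      fun z : ℂ => ‖deriv f z‖ ^ 2 :=
    fun u => Filter.Eventually.of_forall fun z => by positivity
  -- key inequality for each s ∈ (r, 1)
  have H : ∀ s : ℝ, r < s → s < 1 →
      volume (f '' ball (0:ℂ) r)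
        ≤ ENNReal.ofReal ((r/s)^2) * volume (f '' ball (0:ℂ) 1) := by
    intro s hrs hs1
    set t : ℝ≥0 := ((s+1)/2).toNNReal with htdef
    have hs0 : 0 < s := lt_trans hr0 hrs
    have htR : (s+1)/2 = (t : ℝ) := (Real.coe_toNNReal _ (by positivity)).symm
    have hst : s < ((s+1)/2) := by linarith
    have ht1 : ((s+1)/2 : ℝ) < 1 := by linarith
    have ht0 : (0:ℝ≥0) < t := by
      rw [← NNReal.coe_lt_coe, ← htR]
      push_cast
      linarith
    -- power series for deriv f on ball of radius t
    have hdcb : DifferentiableOn ℂ (deriv f) (closedBall (0:ℂ) t) := by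
      apply hg.mono
      apply closedBall_subset_ball
      rw [← htR]
      exact ht1
    have hps : HasFPowerSeriesOnBall (deriv f) (cauchyPowerSeries (deriv f) 0 t) 0 t :=
      hdcb.hasFPowerSeriesOnBall ht0
    set p := cauchyPowerSeries (deriv f) 0 t
    have hcoe : ∀ u : ℝ, 0 ≤ u → u < (s+1)/2 → ENNReal.ofReal u < (t : ℝ≥0∞) := by
      intro u hu hu2
      rw [show ((t : ℝ≥0∞)) = ENNReal.ofReal ((s+1)/2) by
        rw [htR]; exact ENNReal.ofReal_coe_nnreal.symm]
      exact ENNReal.ofReal_lt_ofReal_iff_of_nonneg hu |>.2 hu2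
    have h1 := parseval_hasSum (deriv f) p t hps r hr0
      (hcoe r hr0.le (by linarith))
    have h2 := parseval_hasSum (deriv f) p t hps s hs0
      (hcoe s hs0.le hst)
    -- termwise comparison
    have hterm : ∀ n : ℕ,
        ‖p.coeff n‖ ^ 2 * (Real.pi * r ^ (2 * n + 2) / (n + 1))
          ≤ (r/s)^2 * (‖p.coeff n‖ ^ 2 * (Real.pi * s ^ (2 * n + 2) / (n + 1))) := by
      intro n
      have hpow : r ^ (2*n) ≤ s ^ (2*n) := pow_le_pow_left₀ hr0.le hrs.le _
      have hkey : r ^ (2*n+2) ≤ (r/s)^2 * s ^ (2*n+2) := by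
        have he : (r/s)^2 * s^(2*n+2) = s^(2*n) * r^2 := by
          field_simp
          ring
        rw [he]
        calc r^(2*n+2) = r^(2*n) * r^2 := by ring
          _ ≤ s^(2*n) * r^2 := mul_le_mul_of_nonneg_right hpow (by positivity)
      calc ‖p.coeff n‖^2 * (Real.pi * r^(2*n+2) / (n+1))
            = (‖p.coeff n‖^2 * Real.pi / (n+1)) * r^(2*n+2) := by ring
        _ ≤ (‖p.coeff n‖^2 * Real.pi / (n+1)) * ((r/s)^2 * s^(2*n+2)) :=
            mul_le_mul_of_nonneg_left hkey (by positivity)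
        _ = (r/s)^2 * (‖p.coeff n‖^2 * (Real.pi * s^(2*n+2)/(n+1))) := by ring
    have hIle : (∫ z in ball (0:ℂ) r, ‖deriv f z‖ ^ 2)
        ≤ (r/s)^2 * ∫ z in ball (0:ℂ) s, ‖deriv f z‖ ^ 2 :=
      hasSum_le hterm h1 (h2.mul_left ((r/s)^2))
    -- translate to measures
    have hvr : volume (f '' ball (0:ℂ) r)
        = ENNReal.ofReal (∫ z in ball (0:ℂ) r, ‖deriv f z‖ ^ 2) := by
      rw [vol_image f hf hinj r hr1.le,
        ← ofReal_integral_eq_lintegral_ofReal (hint r hr1) (hnn r)]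
    have hvs : volume (f '' ball (0:ℂ) s)
        = ENNReal.ofReal (∫ z in ball (0:ℂ) s, ‖deriv f z‖ ^ 2) := by
      rw [vol_image f hf hinj s hs1.le,
        ← ofReal_integral_eq_lintegral_ofReal (hint s hs1) (hnn s)]
    calc volume (f '' ball (0:ℂ) r)
        = ENNReal.ofReal (∫ z in ball (0:ℂ) r, ‖deriv f z‖ ^ 2) := hvr
      _ ≤ ENNReal.ofReal ((r/s)^2 * ∫ z in ball (0:ℂ) s, ‖deriv f z‖ ^ 2) :=
          ENNReal.ofReal_le_ofReal hIle
      _ = ENNReal.ofReal ((r/s)^2) * ENNReal.ofReal (∫ z in ball (0:ℂ) s, ‖deriv f z‖ ^ 2) :=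
          ENNReal.ofReal_mul (by positivity)
      _ = ENNReal.ofReal ((r/s)^2) * volume (f '' ball (0:ℂ) s) := by rw [hvs]
      _ ≤ ENNReal.ofReal ((r/s)^2) * volume (f '' ball (0:ℂ) 1) := by
          apply mul_le_mul_right
          exact measure_mono (Set.image_mono (ball_subset_ball hs1.le))
  -- limiting argument s → 1⁻
  set V := volume (f '' ball (0:ℂ) 1) with hV
  rcases eq_or_ne V ⊤ with htop | htop
  · rw [htop, ENNReal.mul_top (by simp only [ne_eq, ENNReal.ofReal_eq_zero, not_le]; positivity)]
    exact le_top
  · have htends : Tendsto (fun s : ℝ => ENNReal.ofReal ((r/s)^2) * V) (𝓝[<] (1:ℝ))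
        (𝓝 (ENNReal.ofReal (r^2) * V)) := by
      have h1 : Tendsto (fun s : ℝ => (r/s)^2) (𝓝[<] (1:ℝ)) (𝓝 (r^2)) := by
        have : ContinuousAt (fun s : ℝ => (r/s)^2) 1 :=
          ((continuousAt_const.div continuousAt_id one_ne_zero).pow 2)
        have h2 : Tendsto (fun s : ℝ => (r/s)^2) (𝓝[<] (1:ℝ)) (𝓝 ((r/1)^2)) :=
          this.tendsto.mono_left nhdsWithin_le_nhds
        simpa using h2
      have h3 : Tendsto (fun s : ℝ => ENNReal.ofReal ((r/s)^2)) (𝓝[<] (1:ℝ))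
          (𝓝 (ENNReal.ofReal (r^2))) :=
        (ENNReal.continuous_ofReal.continuousAt.tendsto).comp h1
      exact ENNReal.Tendsto.mul_const h3
        (Or.inr htop)
    apply ge_of_tendsto htends
    filter_upwards [Ioo_mem_nhdsLT_of_mem (⟨hr1, le_refl 1⟩ : (1:ℝ) ∈ Ioc r 1)] with s hsmem
    exact H s hsmem.1 hsmem.2
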